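/- Let (a_n)_{n∈ℕ} be a sequence of nonzero complex numbers such that |a_{n+1}/a_n| → ∞ as n → ∞. Then for every k ≥ 1, every tuple (d_1,…,d_k) of nonzero integers, and every r ∈ ℂ, the set {(n_1,…,n_k) ∈ ℕ^k : n_i ≠ n_j for all distinct i,j ∈ {1,…,k} and d_1·a_{n_1} + ⋯ + d_k·a_{n_k} = r} is finite. -/

import Mathlib

open Filter

/-- divergent case of Lemma 6.2. If `(aₙ)` is a sequence of nonzero complex
numbers with `|a_{n+1}/a_n| → ∞`, then for every `k ≥ 1`, nonzero integer coefficients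
`d₁,…,d_k` and `r ∈ ℂ`, the set of tuples of pairwise distinct indices `(n₁,…,n_k)` with
`d₁ a_{n₁} + ⋯ + d_k a_{n_k} = r` is finite. -/
theorem divergent_lacunary_finite_solutions (a : ℕ → ℂ) (ha : ∀ n, a n ≠ 0)
    (hdiv : Tendsto (fun n => ‖a (n + 1) / a n‖) atTop atTop)
    (k : ℕ) (hk : 1 ≤ k) (d : Fin k → ℤ) (hd : ∀ i, d i ≠ 0) (r : ℂ) :
    {n : Fin k → ℕ | (∀ i j : Fin k, i ≠ j → n i ≠ n j) ∧
      (∑ i, (d i : ℂ) * a (n i)) = r}.Finite := by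
  set C : ℝ := ∑ i, |(d i : ℝ)| with hCdef
  have hd1 : ∀ i, (1 : ℝ) ≤ |(d i : ℝ)| := by
    intro i
    have := Int.one_le_abs (hd i)
    exact_mod_cast this
  have hC1 : (1 : ℝ) ≤ C := by
    obtain ⟨i0⟩ : Nonempty (Fin k) := ⟨⟨0, hk⟩⟩
    calc (1 : ℝ) ≤ |(d i0 : ℝ)| := hd1 i0
      _ ≤ C := Finset.single_le_sum (f := fun i => |(d i : ℝ)|)
        (fun i _ => abs_nonneg _) (Finset.mem_univ i0)
  have hCpos : (0 : ℝ) < 2 * C := by linarith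
  -- choose N with ratio ≥ 2C beyond N
  obtain ⟨N, hN⟩ := eventually_atTop.mp (hdiv.eventually_ge_atTop (2 * C))
  have habspos : ∀ n, 0 < ‖a n‖ := fun n => norm_pos_iff.mpr (ha n)
  have hstep : ∀ n, N ≤ n → 2 * C * ‖a n‖ ≤ ‖a (n + 1)‖ := by
    intro n hn
    have h := hN n hn
    rw [norm_div] at h
    rw [← le_div_iff₀ (habspos n)] at *
    exact h
  have hgrow : ∀ n, N ≤ n → ∀ m, n < m → 2 * C * ‖a n‖ ≤ ‖a m‖ := by
    intro n hn m hm
    induction m with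
    | zero => omega
    | succ m ih =>
      rcases Nat.lt_succ_iff_lt_or_eq.mp hm with h | h
      · have h1 := ih h
        have h2 := hstep m (le_trans hn (Nat.le_of_lt h))
        have h3 : ‖a m‖ ≤ 2 * C * ‖a m‖ := by
          nlinarith [ (habspos m).le ]
        linarith
      · subst h; exact hstep n hn
  -- |a m| → ∞
  have hgeom : Tendsto (fun n => ‖a (n + N)‖) atTop atTop := by
    apply tendsto_atTop_of_geom_le (c := 2) (by simpa using habspos N) one_lt_two
    intro n
    have h := hstep (n + N) (Nat.le_add_left N n)
    have h2 : 2 * ‖a (n + N)‖ ≤ 2 * C * ‖a (n + N)‖ := by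
      nlinarith [(habspos (n + N)).le]
    calc 2 * ‖a (n + N)‖ ≤ 2 * C * ‖a (n + N)‖ := h2
      _ ≤ ‖a (n + N + 1)‖ := h
      _ = ‖a (n + 1 + N)‖ := by ring_nf
  have habs : Tendsto (fun m => ‖a m‖) atTop atTop :=
    (tendsto_add_atTop_iff_nat N).mp hgeom
  set B : ℝ := ∑ n ∈ Finset.range (N + 1), ‖a n‖ with hBdef
  have hB : ∀ t, t ≤ N → ‖a t‖ ≤ B := by
    intro t ht
    exact Finset.single_le_sum (f := fun n => ‖a n‖)
      (fun n _ => (habspos n).le) (Finset.mem_range.mpr (by omega))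
  obtain ⟨M₀, hM₀⟩ := eventually_atTop.mp
    (habs.eventually_ge_atTop (max (2 * C * B) (2 * ‖r‖ + 1)))
  set M := max M₀ (N + 1) with hMdef
  -- all solutions have indices < M
  apply Set.Finite.subset (Set.Finite.pi (fun _ : Fin k => Set.finite_Iio M))
  intro n hn
  obtain ⟨hdist, hsum⟩ := hn
  simp only [Set.mem_pi, Set.mem_univ, Set.mem_Iio, forall_const]
  by_contra hcon
  push_neg at hcon
  obtain ⟨i0, hi0⟩ := hcon
  obtain ⟨j, -, hj⟩ := Finset.exists_max_image Finset.univ n ⟨i0, Finset.mem_univ i0⟩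
  have hjM : M ≤ n j := le_trans hi0 (hj i0 (Finset.mem_univ i0))
  set m := n j with hmdef
  have hmN : N + 1 ≤ m := le_trans (le_max_right _ _) hjM
  have ham : max (2 * C * B) (2 * ‖r‖ + 1) ≤ ‖a m‖ :=
    hM₀ m (le_trans (le_max_left _ _) hjM)
  have ham1 : 2 * C * B ≤ ‖a m‖ := le_trans (le_max_left _ _) ham
  have ham2 : 2 * ‖r‖ + 1 ≤ ‖a m‖ := le_trans (le_max_right _ _) ham
  -- each other term is small
  have hsmall : ∀ i, i ≠ j → ‖a (n i)‖ ≤ ‖a m‖ / (2 * C) := by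
    intro i hij
    have hlt : n i < m := lt_of_le_of_ne (hj i (Finset.mem_univ i)) (hdist i j hij)
    rcases le_or_gt (n i) N with h | h
    · calc ‖a (n i)‖ ≤ B := hB _ h
        _ ≤ ‖a m‖ / (2 * C) := by
          rw [le_div_iff₀ hCpos]; linarith [ham1]
    · have := hgrow (n i) (Nat.le_of_lt h) m hlt
      rw [le_div_iff₀ hCpos]; linarith
  -- split the sum
  have hsplit : (d j : ℂ) * a m + ∑ i ∈ Finset.univ.erase j, (d i : ℂ) * a (n i) = r := by
    rw [hmdef, Finset.add_sum_erase _ (fun i => (d i : ℂ) * a (n i)) (Finset.mem_univ j)]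
    exact hsum
  set S := ∑ i ∈ Finset.univ.erase j, (d i : ℂ) * a (n i) with hSdef
  have hSbound : ‖S‖ ≤ ‖a m‖ / 2 := by
    calc ‖S‖ ≤ ∑ i ∈ Finset.univ.erase j, ‖(d i : ℂ) * a (n i)‖ :=
          norm_sum_le _ _
      _ ≤ ∑ i ∈ Finset.univ.erase j, |(d i : ℝ)| * (‖a m‖ / (2 * C)) := by
          apply Finset.sum_le_sum
          intro i hi
          have hij : i ≠ j := Finset.ne_of_mem_erase hi
          rw [norm_mul]
          have h1 : ‖(d i : ℂ)‖ = |(d i : ℝ)| := by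
            rw [show ((d i : ℂ)) = ((d i : ℝ) : ℂ) by push_cast; ring, Complex.norm_real, Real.norm_eq_abs]
          rw [h1]
          exact mul_le_mul_of_nonneg_left (hsmall i hij) (abs_nonneg _)
      _ ≤ C * (‖a m‖ / (2 * C)) := by
          rw [← Finset.sum_mul]
          apply mul_le_mul_of_nonneg_right _ (by positivity)
          exact Finset.sum_le_sum_of_subset_of_nonneg (Finset.subset_univ _)
            (fun i _ _ => abs_nonneg _)
      _ = ‖a m‖ / 2 := by field_simp
  have hdja : ‖a m‖ ≤ ‖(d j : ℂ) * a m‖ := by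
    rw [norm_mul]
    have h1 : ‖(d j : ℂ)‖ = |(d j : ℝ)| := by
      rw [show ((d j : ℂ)) = ((d j : ℝ) : ℂ) by push_cast; ring, Complex.norm_real, Real.norm_eq_abs]
    nlinarith [hd1 j, (habspos m).le, h1]
  have htri : ‖(d j : ℂ) * a m‖ ≤ ‖r‖ + ‖S‖ := by
    have : (d j : ℂ) * a m = r - S := by rw [← hsplit]; ring
    rw [this]
    exact (norm_sub_le _ _).trans (by simp [add_comm])
  linarith
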